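/- arXiv:1203.3721 — 3 statements merged into one kernel-verified Lean document; each statement's English description precedes it below -/
import Mathlib

section
/- Let U, W ⊂ ℝ^m and V ⊂ ℝ^l be measurable sets and let Ψ : U × V → W be a continuous map such that for every measurable function g : W → ℝ one has ∫_V ‖g∘Ψ_z‖_{L^1(U)} dz ≤ C ‖g‖_{L^1(W)}, where Ψ_z(x) = Ψ(x,z). If u ∈ L^p(W; ℝ^ν) with 1 ≤ p < ∞ and (u_n) is a sequence of measurable functions converging to u in L^p(W; ℝ^ν), then there exists a subsequence (u_{n_i}) such that for almost every z ∈ V: (i) the sequence (u_{n_i} ∘ Ψ_z) converges in L^p(U; ℝ^ν) to a function denoted u∘Ψ_z; (ii) the essential range of u∘Ψ_z is contained in the essential range of u. -/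
open MeasureTheory Metric Set Filter
open scoped ENNReal Topology Pointwise

noncomputable section

/-- `ℝ^m`. -/
abbrev Euc (m : ℕ) : Type := EuclideanSpace ℝ (Fin m)

/-- The open cube `Q^m_r(a)` of center `a` and radius `r` (half of the side length). -/
def cubeO {m : ℕ} (a : Euc m) (r : ℝ) : Set (Euc m) := {x | ∀ i, |x i - a i| < r}

/-- The closed cube of center `a` and radius `r` (half of the side length). -/
def cubeC {m : ℕ} (a : Euc m) (r : ℝ) : Set (Euc m) := {x | ∀ i, |x i - a i| ≤ r}

/-- `v` is the weak (distributional) iterated derivative of order `j` of `u` on `Ω`: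
for every smooth test function `φ` compactly supported in `Ω` and all directions `d`,
`∫_Ω (D^j φ)[d] u = (-1)^j ∫_Ω φ v[d]`. -/
def IsWeakIteratedFDeriv {E F : Type*} [NormedAddCommGroup E] [NormedSpace ℝ E] [MeasureSpace E]
    [NormedAddCommGroup F] [NormedSpace ℝ F]
    (Ω : Set E) (j : ℕ) (u : E → F)
    (v : E → ContinuousMultilinearMap ℝ (fun _ : Fin j => E) F) : Prop :=
  ∀ φ : E → ℝ, ContDiff ℝ (⊤ : ℕ∞) φ → HasCompactSupport φ → tsupport φ ⊆ Ω →
    ∀ d : Fin j → E,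
      ∫ x in Ω, iteratedFDeriv ℝ j φ x d • u x
        = (-1 : ℝ) ^ j • ∫ x in Ω, φ x • v x d

/-- A map of Sobolev class `W^{k,p}(Ω; F)`: a `p`-integrable map together with a choice of its
weak derivatives up to order `k`, all of them `p`-integrable on `Ω`. -/
structure SobolevMap (E F : Type*) [NormedAddCommGroup E] [NormedSpace ℝ E] [MeasureSpace E]
    [NormedAddCommGroup F] [NormedSpace ℝ F] (k : ℕ) (p : ℝ) (Ω : Set E) where
  toFun : E → F
  deriv : (j : ℕ) → E → ContinuousMultilinearMap ℝ (fun _ : Fin j => E) F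
  memLp_toFun : MemLp toFun (ENNReal.ofReal p) (volume.restrict Ω)
  isWeakDeriv : ∀ j, 1 ≤ j → j ≤ k → IsWeakIteratedFDeriv Ω j toFun (deriv j)
  memLp_deriv : ∀ j, 1 ≤ j → j ≤ k → MemLp (deriv j) (ENNReal.ofReal p) (volume.restrict Ω)

/-- The `W^{k,p}(Ω)` distance `‖u - g‖_{L^p} + ∑_{j=1}^k ‖D^j u - D^j g‖_{L^p}` between a
Sobolev map `u` and a (smooth) map `g`, whose derivatives are taken classically. -/
def sobDistSmooth {E F : Type*} [NormedAddCommGroup E] [NormedSpace ℝ E] [MeasureSpace E]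
    [NormedAddCommGroup F] [NormedSpace ℝ F] {k : ℕ} {p : ℝ} {Ω : Set E}
    (u : SobolevMap E F k p Ω) (g : E → F) : ℝ≥0∞ :=
  eLpNorm (fun x => u.toFun x - g x) (ENNReal.ofReal p) (volume.restrict Ω)
    + ∑ j ∈ Finset.Icc 1 k,
        eLpNorm (fun x => u.deriv j x - iteratedFDeriv ℝ j g x) (ENNReal.ofReal p)
          (volume.restrict Ω)

/-- The `W^{k,p}(Ω)` distance `‖u - v‖_{L^p} + ∑_{j=1}^k ‖D^j u - D^j v‖_{L^p}` between two
Sobolev maps. -/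
def sobDist {E F : Type*} [NormedAddCommGroup E] [NormedSpace ℝ E] [MeasureSpace E]
    [NormedAddCommGroup F] [NormedSpace ℝ F] {k : ℕ} {p : ℝ} {Ω : Set E}
    (u v : SobolevMap E F k p Ω) : ℝ≥0∞ :=
  eLpNorm (fun x => u.toFun x - v.toFun x) (ENNReal.ofReal p) (volume.restrict Ω)
    + ∑ j ∈ Finset.Icc 1 k,
        eLpNorm (fun x => u.deriv j x - v.deriv j x) (ENNReal.ofReal p) (volume.restrict Ω)

/-- A sequence of (smooth) maps `un` converges to `u` strongly in `W^{k,p}(Ω)`. -/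
def TendstoSobolevSmooth {E F : Type*} [NormedAddCommGroup E] [NormedSpace ℝ E] [MeasureSpace E]
    [NormedAddCommGroup F] [NormedSpace ℝ F] {k : ℕ} {p : ℝ} {Ω : Set E}
    (un : ℕ → E → F) (u : SobolevMap E F k p Ω) : Prop :=
  Tendsto (fun n => sobDistSmooth u (un n)) atTop (𝓝 0)

/-- `v` is a composition `u ∘ Φ` in the `W^{k,p}(Ω)` sense: there is a sequence of smooth maps
converging to `u` in `W^{k,p}(Ω)` whose compositions with `Φ` converge to `v` in `W^{k,p}(Ω)`. -/
def IsSobolevComp {E F : Type*} [NormedAddCommGroup E] [NormedSpace ℝ E] [MeasureSpace E]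
    [NormedAddCommGroup F] [NormedSpace ℝ F] {k : ℕ} {p : ℝ} {Ω : Set E}
    (u : SobolevMap E F k p Ω) (Φ : E → E) (v : SobolevMap E F k p Ω) : Prop :=
  ∃ un : ℕ → E → F, (∀ i, ContDiff ℝ (⊤ : ℕ∞) (un i)) ∧
    TendstoSobolevSmooth un u ∧ TendstoSobolevSmooth (fun i x => un i (Φ x)) v

/-- `N` is a smooth `n`-dimensional submanifold of `ℝ^ν`: around each of its points, `N` can be
smoothly straightened onto the subspace of `ℝ^ν` spanned by the first `n` coordinates. -/
def IsSmoothSubmanifold {ν : ℕ} (n : ℕ) (N : Set (Euc ν)) : Prop :=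
  ∀ x ∈ N, ∃ (U V : Set (Euc ν)) (φ ψ : Euc ν → Euc ν),
    IsOpen U ∧ IsOpen V ∧ x ∈ U ∧
    ContDiffOn ℝ (⊤ : ℕ∞) φ U ∧ ContDiffOn ℝ (⊤ : ℕ∞) ψ V ∧
    MapsTo φ U V ∧ MapsTo ψ V U ∧
    (∀ y ∈ U, ψ (φ y) = y) ∧ (∀ y ∈ V, φ (ψ y) = y) ∧
    (∀ y ∈ U, (y ∈ N ↔ ∀ i : Fin ν, n ≤ (i : ℕ) → φ y i = 0))

/-- The homotopy group `π_ℓ(N)` is trivial: every continuous map from the sphere `S^ℓ` with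
values in `N` has a continuous extension to the closed unit ball `B^{ℓ+1}` with values in `N`. -/
def PiTrivial (ℓ : ℕ) {ν : ℕ} (N : Set (Euc ν)) : Prop :=
  ∀ f : Euc (ℓ + 1) → Euc ν,
    ContinuousOn f (sphere (0 : Euc (ℓ + 1)) 1) → MapsTo f (sphere (0 : Euc (ℓ + 1)) 1) N →
    ∃ F : Euc (ℓ + 1) → Euc ν,
      ContinuousOn F (closedBall (0 : Euc (ℓ + 1)) 1) ∧
      MapsTo F (closedBall (0 : Euc (ℓ + 1)) 1) N ∧
      EqOn F f (sphere (0 : Euc (ℓ + 1)) 1)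

/-- The essential range of `f` with respect to the measure `μ`: the set of points all of whose
neighborhoods are hit by `f` on a set of positive measure. -/
def essRange {α : Type*} [MeasurableSpace α] (μ : Measure α) {E : Type*} [TopologicalSpace E]
    (f : α → E) : Set E :=
  {y | ∀ U : Set E, IsOpen U → y ∈ U → 0 < μ (f ⁻¹' U)}

section AuxEssRange

variable {α E : Type*} [MeasurableSpace α] {μ : MeasureTheory.Measure α} [TopologicalSpace E]

lemma isOpen_compl_essRange (f : α → E) : IsOpen (essRange μ f)ᶜ := by
  rw [isOpen_iff_forall_mem_open]
  intro y hy
  simp only [mem_compl_iff, essRange, mem_setOf_eq, not_forall] at hy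
  obtain ⟨O, hO, hyO, hμO⟩ := hy
  refine ⟨O, fun y' hy' h' => hμO ?_, hO, hyO⟩
  exact h' O hO hy'

lemma essRange_subset_of_ae_mem {f : α → E} {F : Set E} (hF : IsClosed F)
    (h : ∀ᵐ x ∂μ, f x ∈ F) : essRange μ f ⊆ F := by
  intro y hy
  by_contra hyF
  have h1 : 0 < μ (f ⁻¹' Fᶜ) := hy Fᶜ hF.isOpen_compl hyF
  have h2 : μ (f ⁻¹' Fᶜ) = 0 := by
    rw [MeasureTheory.ae_iff] at h
    exact h
  exact absurd h2 h1.ne'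

lemma essRange_mono_ae {f g : α → E} (h : f =ᵐ[μ] g) :
    essRange μ f ⊆ essRange μ g := by
  intro y hy O hO hyO
  have h0 : μ {x | f x ≠ g x} = 0 := h
  have hsub : f ⁻¹' O ⊆ g ⁻¹' O ∪ {x | f x ≠ g x} := by
    intro x hx
    by_cases hfg : f x = g x
    · exact Or.inl (by simpa [Set.mem_preimage, ← hfg] using hx)
    · exact Or.inr hfg
  calc (0 : ℝ≥0∞) < μ (f ⁻¹' O) := hy O hO hyO
    _ ≤ μ (g ⁻¹' O ∪ {x | f x ≠ g x}) := measure_mono hsub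
    _ ≤ μ (g ⁻¹' O) + μ {x | f x ≠ g x} := measure_union_le _ _
    _ = μ (g ⁻¹' O) := by rw [h0, add_zero]

lemma essRange_null_compl [SecondCountableTopology E] (f : α → E) :
    μ (f ⁻¹' (essRange μ f)ᶜ) = 0 := by
  classical
  set B := TopologicalSpace.countableBasis E with hB
  set 𝒰 : Set (Set E) := {b ∈ B | μ (f ⁻¹' b) = 0} with h𝒰
  have h𝒰count : 𝒰.Countable :=
    (TopologicalSpace.countable_countableBasis E).mono (sep_subset _ _)
  have hsub : (essRange μ f)ᶜ ⊆ ⋃₀ 𝒰 := by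
    intro y hy
    simp only [mem_compl_iff, essRange, mem_setOf_eq, not_forall] at hy
    obtain ⟨O, hO, hyO, hμO⟩ := hy
    have hμO0 : μ (f ⁻¹' O) = 0 := by simpa using hμO
    obtain ⟨b, hbB, hyb, hbO⟩ :=
      (TopologicalSpace.isBasis_countableBasis E).exists_subset_of_mem_open hyO hO
    refine ⟨b, ⟨hbB, ?_⟩, hyb⟩
    exact measure_mono_null (preimage_mono hbO) hμO0
  have : μ (f ⁻¹' ⋃₀ 𝒰) = 0 := by
    rw [preimage_sUnion]
    exact (measure_biUnion_null_iff h𝒰count).mpr fun b hb => hb.2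
  exact measure_mono_null (preimage_mono hsub) this

end AuxEssRange

/-- let `Ψ : U × V → W` be continuous with
`∫_V ‖g ∘ Ψ_z‖_{L^1(U)} dz ≤ C ‖g‖_{L^1(W)}` for every measurable `g`. If `u_n → u` in
`L^p(W; ℝ^ν)`, then along a subsequence, for a.e. `z ∈ V` the maps `u_{n_i} ∘ Ψ_z` converge in
`L^p(U; ℝ^ν)` to a map `u ∘ Ψ_z` whose essential range is contained in the essential range
of `u`. -/
theorem composition_Lp_limit
    (m l ν : ℕ) (p : ℝ) (hp : 1 ≤ p)
    (U W : Set (Euc m)) (V : Set (Euc l))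
    (hU : MeasurableSet U) (hV : MeasurableSet V) (hW : MeasurableSet W)
    (Ψ : Euc m × Euc l → Euc m)
    (hΨc : ContinuousOn Ψ (U ×ˢ V))
    (hΨw : ∀ x ∈ U, ∀ z ∈ V, Ψ (x, z) ∈ W)
    (C : ℝ)
    (hΨint : ∀ g : Euc m → ℝ, Measurable g →
      ∫⁻ z in V, ∫⁻ x in U, (‖g (Ψ (x, z))‖₊ : ℝ≥0∞)
        ≤ ENNReal.ofReal C * ∫⁻ x in W, (‖g x‖₊ : ℝ≥0∞))
    (u : Euc m → Euc ν)
    (hu : MemLp u (ENNReal.ofReal p) (volume.restrict W))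
    (un : ℕ → Euc m → Euc ν) (hun : ∀ n, Measurable (un n))
    (hconv : Tendsto
      (fun n => eLpNorm (fun x => un n x - u x) (ENNReal.ofReal p) (volume.restrict W))
      atTop (𝓝 0)) :
    ∃ φ : ℕ → ℕ, StrictMono φ ∧
      ∃ w : Euc l → Euc m → Euc ν,
        ∀ᵐ z ∂(volume.restrict V),
          Tendsto (fun i => eLpNorm (fun x => un (φ i) (Ψ (x, z)) - w z x)
              (ENNReal.ofReal p) (volume.restrict U)) atTop (𝓝 0) ∧
          essRange (volume.restrict U) (w z) ⊆ essRange (volume.restrict W) u := by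
  classical
  have hp0 : (0:ℝ) < p := lt_of_lt_of_le one_pos hp
  set q : ℝ≥0∞ := ENNReal.ofReal p with hqdef
  have hq0 : q ≠ 0 := by
    simp only [hqdef, Ne, ENNReal.ofReal_eq_zero, not_le]; exact hp0
  have hqtop : q ≠ ∞ := ENNReal.ofReal_ne_top
  have hqr : q.toReal = p := ENNReal.toReal_ofReal hp0.le
  -- measurable representative of u
  set ub : Euc m → Euc ν := hu.1.mk u with hubdef
  have hubm : Measurable ub := hu.1.stronglyMeasurable_mk.measurable
  have hubae : u =ᵐ[volume.restrict W] ub := hu.1.ae_eq_mk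
  -- measurable modification of Ψ
  set Ψ' : Euc m × Euc l → Euc m := (U ×ˢ V).piecewise Ψ (fun _ => 0) with hΨ'def
  have hΨ'm : Measurable Ψ' :=
    ContinuousOn.measurable_piecewise hΨc continuous_const.continuousOn (hU.prod hV)
  have hΨ'eq : ∀ x ∈ U, ∀ z ∈ V, Ψ' (x, z) = Ψ (x, z) := fun x hx z hz =>
    Set.piecewise_eq_of_mem _ _ _ (Set.mem_prod.mpr ⟨hx, hz⟩)
  -- subsequence with geometric errors
  have hconv' : Tendsto (fun n => eLpNorm (fun x => un n x - ub x) q (volume.restrict W))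
      atTop (𝓝 0) := by
    have heq : (fun n => eLpNorm (fun x => un n x - ub x) q (volume.restrict W))
        = fun n => eLpNorm (fun x => un n x - u x) q (volume.restrict W) := by
      funext n
      exact eLpNorm_congr_ae (hubae.mono fun x hx => by simp only [hx])
    rw [heq]; exact hconv
  have key : ∀ i : ℕ, ∃ Nn : ℕ, ∀ n ≥ Nn,
      eLpNorm (fun x => un n x - ub x) q (volume.restrict W) ≤ (2:ℝ≥0∞)⁻¹ ^ i := by
    intro i
    refine ENNReal.tendsto_atTop_zero.mp hconv' _ ?_
    exact ENNReal.pow_pos (ENNReal.inv_pos.mpr ENNReal.ofNat_ne_top) i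
  choose Nn hNn using key
  set φ : ℕ → ℕ := fun i => Nat.rec (Nn 0) (fun i ih => max (ih + 1) (Nn (i + 1))) i with hφdef
  have hφmono : StrictMono φ := strictMono_nat_of_lt_succ fun i =>
    lt_of_lt_of_le (Nat.lt_succ_self _) (le_max_left _ _)
  have hφN : ∀ i, Nn i ≤ φ i := by
    intro i
    cases i with
    | zero => exact le_rfl
    | succ i => exact le_max_right _ _
  have hδ : ∀ i, eLpNorm (fun x => un (φ i) x - ub x) q (volume.restrict W) ≤ (2:ℝ≥0∞)⁻¹ ^ i :=
    fun i => hNn i _ (hφN i)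
  -- pointwise identity between the real and ENNReal integrands
  have hgD : ∀ (i : ℕ) (y : Euc m), (‖(‖un (φ i) y - ub y‖ ^ p : ℝ)‖₊ : ℝ≥0∞)
      = (‖un (φ i) y - ub y‖₊ : ℝ≥0∞) ^ p := by
    intro i y
    rw [← ENNReal.ofReal_coe_nnreal, coe_nnnorm, Real.norm_of_nonneg (Real.rpow_nonneg (norm_nonneg _) _),
      ← ENNReal.ofReal_rpow_of_nonneg (norm_nonneg _) hp0.le, ← coe_nnnorm, ENNReal.ofReal_coe_nnreal]
  -- measurability of the inner integrals in z
  have hFm : ∀ i : ℕ, Measurable (fun z : Euc l =>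
      ∫⁻ x in U, (‖un (φ i) (Ψ' (x, z)) - ub (Ψ' (x, z))‖₊ : ℝ≥0∞) ^ p) := by
    intro i
    exact Measurable.lintegral_prod_left
      (ENNReal.continuous_rpow_const.measurable.comp
        (((hun (φ i)).comp hΨ'm).sub (hubm.comp hΨ'm)).enorm)
  -- the key integral bound coming from `hΨint`
  have hFint : ∀ i : ℕ,
      (∫⁻ z in V, ∫⁻ x in U, (‖un (φ i) (Ψ' (x, z)) - ub (Ψ' (x, z))‖₊ : ℝ≥0∞) ^ p)
        ≤ ENNReal.ofReal C * (2:ℝ≥0∞)⁻¹ ^ i := by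
    intro i
    have hgm : Measurable fun y => (‖un (φ i) y - ub y‖ ^ p : ℝ) :=
      (Real.continuous_rpow_const hp0.le).measurable.comp ((hun (φ i)).sub hubm).norm
    have hmain := hΨint (fun y => ‖un (φ i) y - ub y‖ ^ p) hgm
    have hL : (∫⁻ z in V, ∫⁻ x in U, (‖un (φ i) (Ψ' (x, z)) - ub (Ψ' (x, z))‖₊ : ℝ≥0∞) ^ p)
        = ∫⁻ z in V, ∫⁻ x in U, (‖(‖un (φ i) (Ψ (x, z)) - ub (Ψ (x, z))‖ ^ p : ℝ)‖₊ : ℝ≥0∞) := by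
      refine lintegral_congr_ae ?_
      filter_upwards [ae_restrict_mem hV] with z hz
      refine lintegral_congr_ae ?_
      filter_upwards [ae_restrict_mem hU] with x hx
      rw [hgD, hΨ'eq x hx z hz]
    have h1 : (eLpNorm (fun x => un (φ i) x - ub x) q (volume.restrict W)) ^ p
        = ∫⁻ x in W, (‖(‖un (φ i) x - ub x‖ ^ p : ℝ)‖₊ : ℝ≥0∞) := by
      rw [eLpNorm_eq_lintegral_rpow_enorm_toReal hq0 hqtop, hqr, ← ENNReal.rpow_mul,
        one_div, inv_mul_cancel₀ hp0.ne', ENNReal.rpow_one]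
      exact lintegral_congr fun x => (hgD i x).symm
    have hR : (∫⁻ x in W, (‖(‖un (φ i) x - ub x‖ ^ p : ℝ)‖₊ : ℝ≥0∞)) ≤ (2:ℝ≥0∞)⁻¹ ^ i := by
      rw [← h1]
      calc (eLpNorm (fun x => un (φ i) x - ub x) q (volume.restrict W)) ^ p
          ≤ ((2:ℝ≥0∞)⁻¹ ^ i) ^ p := ENNReal.rpow_le_rpow (hδ i) hp0.le
        _ ≤ ((2:ℝ≥0∞)⁻¹ ^ i) ^ (1:ℝ) :=
            ENNReal.rpow_le_rpow_of_exponent_ge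
              (pow_le_one₀ zero_le (ENNReal.inv_le_one.mpr one_le_two)) hp
        _ = (2:ℝ≥0∞)⁻¹ ^ i := ENNReal.rpow_one _
    rw [hL]
    exact le_trans hmain (mul_le_mul_right hR _)
  -- summability of the integrals
  have htsum : (∑' i : ℕ, ∫⁻ z in V,
      ∫⁻ x in U, (‖un (φ i) (Ψ' (x, z)) - ub (Ψ' (x, z))‖₊ : ℝ≥0∞) ^ p) ≠ ∞ := by
    have hle := ENNReal.tsum_le_tsum hFint
    have hgeom : (∑' i : ℕ, ENNReal.ofReal C * (2:ℝ≥0∞)⁻¹ ^ i)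
        = ENNReal.ofReal C * (1 - 2⁻¹)⁻¹ := by
      rw [ENNReal.tsum_mul_left, ENNReal.tsum_geometric]
    refine ne_top_of_le_ne_top ?_ hle
    rw [hgeom, ENNReal.one_sub_inv_two]
    exact ENNReal.mul_ne_top ENNReal.ofReal_ne_top
      (ENNReal.inv_ne_top.mpr (ENNReal.inv_ne_zero.mpr ENNReal.ofNat_ne_top))
  have hSm : Measurable (fun z : Euc l =>
      ∑' i : ℕ, ∫⁻ x in U, (‖un (φ i) (Ψ' (x, z)) - ub (Ψ' (x, z))‖₊ : ℝ≥0∞) ^ p) :=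
    Measurable.ennreal_tsum hFm
  have hSint : (∫⁻ z in V,
      ∑' i : ℕ, ∫⁻ x in U, (‖un (φ i) (Ψ' (x, z)) - ub (Ψ' (x, z))‖₊ : ℝ≥0∞) ^ p) ≠ ∞ := by
    rw [lintegral_tsum fun i => (hFm i).aemeasurable]
    exact htsum
  have hSae : ∀ᵐ z ∂(volume.restrict V),
      (∑' i : ℕ, ∫⁻ x in U, (‖un (φ i) (Ψ' (x, z)) - ub (Ψ' (x, z))‖₊ : ℝ≥0∞) ^ p) < ∞ :=
    ae_lt_top hSm hSint
  -- the essential-range null set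
  have hErClosed : IsClosed (essRange (volume.restrict W) ub) :=
    isOpen_compl_iff.mp (isOpen_compl_essRange ub)
  have hErNull : (volume.restrict W) (ub ⁻¹' (essRange (volume.restrict W) ub)ᶜ) = 0 :=
    essRange_null_compl ub
  set Nset : Set (Euc m) := ub ⁻¹' (essRange (volume.restrict W) ub)ᶜ ∩ W with hNdef
  have hNmeas : MeasurableSet Nset :=
    (hubm (isOpen_compl_essRange ub).measurableSet).inter hW
  have hNnull : (volume.restrict W) Nset = 0 :=
    measure_mono_null inter_subset_left hErNull
  have hGm : Measurable (fun z : Euc l =>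
      ∫⁻ x in U, Nset.indicator (fun _ => (1:ℝ≥0∞)) (Ψ' (x, z))) :=
    Measurable.lintegral_prod_left ((measurable_const.indicator hNmeas).comp hΨ'm)
  have hind : ∀ y : Euc m, (‖Nset.indicator (fun _ => (1:ℝ)) y‖₊ : ℝ≥0∞)
      = Nset.indicator (fun _ => (1:ℝ≥0∞)) y := by
    intro y
    by_cases hy : y ∈ Nset <;> simp [hy]
  have hG0 : ∀ᵐ z ∂(volume.restrict V),
      (∫⁻ x in U, Nset.indicator (fun _ => (1:ℝ≥0∞)) (Ψ' (x, z))) = 0 := by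
    have hmain := hΨint (Nset.indicator fun _ => (1:ℝ)) (measurable_const.indicator hNmeas)
    have hRzero : (∫⁻ x in W, (‖Nset.indicator (fun _ => (1:ℝ)) x‖₊ : ℝ≥0∞)) = 0 := by
      calc (∫⁻ x in W, (‖Nset.indicator (fun _ => (1:ℝ)) x‖₊ : ℝ≥0∞))
          = ∫⁻ x in W, Nset.indicator (fun _ => (1:ℝ≥0∞)) x := lintegral_congr fun x => hind x
        _ = (volume.restrict W) Nset := lintegral_indicator_one hNmeas
        _ = 0 := hNnull
    have hL0 : (∫⁻ z in V, ∫⁻ x in U, Nset.indicator (fun _ => (1:ℝ≥0∞)) (Ψ' (x, z))) = 0 := by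
      have hLeq : (∫⁻ z in V, ∫⁻ x in U, Nset.indicator (fun _ => (1:ℝ≥0∞)) (Ψ' (x, z)))
          = ∫⁻ z in V, ∫⁻ x in U,
              (‖Nset.indicator (fun _ => (1:ℝ)) (Ψ (x, z))‖₊ : ℝ≥0∞) := by
        refine lintegral_congr_ae ?_
        filter_upwards [ae_restrict_mem hV] with z hz
        refine lintegral_congr_ae ?_
        filter_upwards [ae_restrict_mem hU] with x hx
        rw [hind, hΨ'eq x hx z hz]
      rw [hLeq]
      refine le_antisymm ?_ zero_le
      calc (∫⁻ z in V, ∫⁻ x in U, (‖Nset.indicator (fun _ => (1:ℝ)) (Ψ (x, z))‖₊ : ℝ≥0∞))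
          ≤ ENNReal.ofReal C * ∫⁻ x in W, (‖Nset.indicator (fun _ => (1:ℝ)) x‖₊ : ℝ≥0∞) := hmain
        _ = 0 := by rw [hRzero, mul_zero]
    exact (lintegral_eq_zero_iff hGm).mp hL0
  -- conclusion
  refine ⟨φ, hφmono, fun z x => ub (Ψ' (x, z)), ?_⟩
  filter_upwards [ae_restrict_mem hV, hSae, hG0] with z hzV hSz hGz
  constructor
  · -- convergence in L^p(U)
    have heq_i : ∀ i : ℕ,
        eLpNorm (fun x => un (φ i) (Ψ (x, z)) - ub (Ψ' (x, z))) q (volume.restrict U)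
          = (∫⁻ x in U, (‖un (φ i) (Ψ' (x, z)) - ub (Ψ' (x, z))‖₊ : ℝ≥0∞) ^ p) ^ (1 / p) := by
      intro i
      have hae : (fun x => un (φ i) (Ψ (x, z)) - ub (Ψ' (x, z)))
          =ᵐ[volume.restrict U] fun x => un (φ i) (Ψ' (x, z)) - ub (Ψ' (x, z)) := by
        filter_upwards [ae_restrict_mem hU] with x hx
        rw [hΨ'eq x hx z hzV]
      rw [eLpNorm_congr_ae hae, eLpNorm_eq_lintegral_rpow_enorm_toReal hq0 hqtop, hqr]; rfl
    have hT : Tendsto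
        (fun i => ∫⁻ x in U, (‖un (φ i) (Ψ' (x, z)) - ub (Ψ' (x, z))‖₊ : ℝ≥0∞) ^ p)
        atTop (𝓝 0) := ENNReal.tendsto_atTop_zero_of_tsum_ne_top hSz.ne
    have hTp : Tendsto
        (fun i => (∫⁻ x in U, (‖un (φ i) (Ψ' (x, z)) - ub (Ψ' (x, z))‖₊ : ℝ≥0∞) ^ p) ^ (1 / p))
        atTop (𝓝 0) := by
      have hc := (ENNReal.continuous_rpow_const (y := 1 / p)).tendsto (0 : ℝ≥0∞)
      have := hc.comp hT
      rwa [ENNReal.zero_rpow_of_pos (by positivity)] at this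
    simpa only [heq_i] using hTp
  · -- essential range
    have hinnerm : Measurable fun x : Euc m =>
        Nset.indicator (fun _ => (1:ℝ≥0∞)) (Ψ' (x, z)) :=
      (measurable_const.indicator hNmeas).comp (hΨ'm.comp (measurable_id.prodMk measurable_const))
    have hinner : ∀ᵐ x ∂(volume.restrict U),
        Nset.indicator (fun _ => (1:ℝ≥0∞)) (Ψ' (x, z)) = 0 :=
      (lintegral_eq_zero_iff hinnerm).mp hGz
    have hmem : ∀ᵐ x ∂(volume.restrict U), ub (Ψ' (x, z)) ∈ essRange (volume.restrict W) ub := by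
      filter_upwards [hinner, ae_restrict_mem hU] with x hx hxU
      have hnot : Ψ' (x, z) ∉ Nset := fun hmemN =>
        one_ne_zero (by have h := Set.indicator_apply_eq_zero.mp hx; exact h hmemN)
      have hWmem : Ψ' (x, z) ∈ W := by
        rw [hΨ'eq x hxU z hzV]; exact hΨw x hxU z hzV
      by_contra hc
      exact hnot ⟨hc, hWmem⟩
    refine subset_trans (essRange_subset_of_ae_mem hErClosed hmem) ?_
    exact essRange_mono_ae hubae.symm
end
end

section
/- Let U, V, W ⊂ ℝ^l be measurable sets and let ζ : U + V → ℝ^l be a continuous map such that for every x ∈ U and every z ∈ V one has ζ(x+z) − z ∈ W. Then, for every measurable function g : W → ℝ, ∫_V ( ∫_U |g(ζ(x+z) − z)| dx ) dz ≤ |U+V| ∫_W |g(x)| dx. -/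
open MeasureTheory Metric Set Filter
open scoped ENNReal Topology Pointwise

noncomputable section

/-- if `ζ : U + V → ℝ^l` is continuous and `ζ(x+z) - z ∈ W` for all `x ∈ U`,
`z ∈ V`, then for every measurable `g : W → ℝ`,
`∫_V ∫_U |g(ζ(x+z) - z)| dx dz ≤ |U + V| ∫_W |g|`. -/
theorem translation_change_of_variables_estimate
    (l : ℕ) (U V W : Set (Euc l))
    (hU : MeasurableSet U) (hV : MeasurableSet V) (hW : MeasurableSet W)
    (ζ : Euc l → Euc l) (hζ : ContinuousOn ζ (U + V))
    (hmap : ∀ x ∈ U, ∀ z ∈ V, ζ (x + z) - z ∈ W)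
    (g : Euc l → ℝ) (hg : Measurable g) :
    ∫⁻ z in V, ∫⁻ x in U, ENNReal.ofReal |g (ζ (x + z) - z)|
      ≤ volume (U + V) * ∫⁻ x in W, ENNReal.ofReal |g x| := by
  classical
  set H : Euc l → ℝ≥0∞ := W.indicator (fun w => ENNReal.ofReal |g w|) with hHdef
  have hHmeas : Measurable H := (hg.abs.ennreal_ofReal).indicator hW
  set T : Set (Euc l × Euc l) := {p | p.1 ∈ V ∧ p.2 - p.1 ∈ U} with hTdef
  have hTmeas : MeasurableSet T :=
    (measurable_fst hV).inter ((measurable_snd.sub measurable_fst) hU)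
  set F : Euc l × Euc l → ℝ≥0∞ := T.indicator (fun p => H (ζ p.2 - p.1)) with hFdef
  have hTsub : ∀ p ∈ T, p.2 ∈ U + V := by
    intro p hp
    have : (p.2 - p.1) + p.1 ∈ U + V := Set.add_mem_add hp.2 hp.1
    simpa using this
  have hFmeas : AEMeasurable F ((volume : Measure (Euc l)).prod volume) := by
    rw [hFdef, aemeasurable_indicator_iff hTmeas]
    have hcont : ContinuousOn (fun p : Euc l × Euc l => ζ p.2 - p.1) T := by
      exact (hζ.comp continuous_snd.continuousOn hTsub).sub continuous_fst.continuousOn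
    exact hHmeas.comp_aemeasurable (hcont.aemeasurable hTmeas)
  have hsub : ∀ c : Euc l, (∫⁻ z, H (c - z)) = ∫⁻ w, H w := by
    intro c
    have h1 : (∫⁻ z, H (c - z)) = ∫⁻ z, H (c + z) := by
      calc (∫⁻ z, H (c - z) ∂(volume : Measure (Euc l)))
          = ∫⁻ z, H (c - z) ∂(Measure.map Neg.neg (volume : Measure (Euc l))) := by
            rw [Measure.map_neg_eq_self]
        _ = ∫⁻ z, H (c - (MeasurableEquiv.neg (Euc l) z)) ∂volume :=
            lintegral_map_equiv (fun z => H (c - z)) (MeasurableEquiv.neg (Euc l))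
        _ = ∫⁻ z, H (c + z) := by
            refine lintegral_congr fun z => ?_
            show H (c - (-z)) = H (c + z)
            rw [sub_neg_eq_add]
    rw [h1, lintegral_add_left_eq_self]
  have step1 : ∀ z ∈ V,
      (∫⁻ x in U, ENNReal.ofReal |g (ζ (x + z) - z)|) = ∫⁻ y, F (z, y) := by
    intro z hz
    have e1 : (∫⁻ x in U, ENNReal.ofReal |g (ζ (x + z) - z)|)
        = ∫⁻ x in U, H (ζ (x + z) - z) := by
      refine setLIntegral_congr_fun hU (fun x hx => ?_)
      rw [hHdef, Set.indicator_of_mem (hmap x hx z hz)]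
    have e2 : (∫⁻ x in U, H (ζ (x + z) - z))
        = ∫⁻ x, U.indicator (fun x => H (ζ (x + z) - z)) x :=
      (lintegral_indicator hU _).symm
    have e3 : (∫⁻ x, U.indicator (fun x => H (ζ (x + z) - z)) x)
        = ∫⁻ y, U.indicator (fun x => H (ζ (x + z) - z)) (y - z) := by
      have := lintegral_add_right_eq_self (μ := (volume : Measure (Euc l)))
        (fun y => U.indicator (fun x => H (ζ (x + z) - z)) (y - z)) z
      simpa using this
    have e4 : ∀ y, U.indicator (fun x => H (ζ (x + z) - z)) (y - z) = F (z, y) := by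
      intro y
      by_cases hy : y - z ∈ U
      · rw [Set.indicator_of_mem hy, hFdef,
          Set.indicator_of_mem (show (z, y) ∈ T from ⟨hz, hy⟩)]
        simp [sub_add_cancel]
      · rw [Set.indicator_of_notMem hy, hFdef,
          Set.indicator_of_notMem (fun hT => hy hT.2)]
    rw [e1, e2, e3]
    exact lintegral_congr e4
  have hpt : ∀ y, (∫⁻ z, F (z, y))
      ≤ (U + V).indicator (fun _ => ∫⁻ w, H w) y := by
    intro y
    by_cases hy : y ∈ U + V
    · rw [Set.indicator_of_mem hy]
      calc (∫⁻ z, F (z, y)) ≤ ∫⁻ z, H (ζ y - z) :=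
            lintegral_mono fun z => Set.indicator_le_self T _ (z, y)
        _ = ∫⁻ w, H w := hsub (ζ y)
    · rw [Set.indicator_of_notMem hy]
      have hz0 : ∀ z, F (z, y) = 0 := by
        intro z
        refine Set.indicator_of_notMem (fun hT => hy ?_) _
        have : (y - z) + z ∈ U + V := Set.add_mem_add hT.2 hT.1
        simpa using this
      simp [hz0]
  calc (∫⁻ z in V, ∫⁻ x in U, ENNReal.ofReal |g (ζ (x + z) - z)|)
      = ∫⁻ z in V, ∫⁻ y, F (z, y) :=
        setLIntegral_congr_fun hV step1
    _ ≤ ∫⁻ z, ∫⁻ y, F (z, y) := setLIntegral_le_lintegral _ _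
    _ = ∫⁻ y, ∫⁻ z, F (z, y) := lintegral_lintegral_swap hFmeas
    _ ≤ ∫⁻ y, (U + V).indicator (fun _ => ∫⁻ w, H w) y := lintegral_mono hpt
    _ ≤ (∫⁻ w, H w) * volume (U + V) := lintegral_indicator_const_le _ _
    _ = volume (U + V) * ∫⁻ x in W, ENNReal.ofReal |g x| := by
        rw [mul_comm, hHdef, lintegral_indicator hW]
end
end

section
/- Let Ω ⊂ ℝ^m be open, φ ∈ C_c^∞(B_1^m) a mollifier, and ψ ∈ C^∞(Ω) a nonnegative function with ‖Dψ‖_{L^∞(Ω)} < 1. Then for every u ∈ L^p(Ω; ℝ^ν) with 1 ≤ p < ∞ and every open set ω ⊂ {x ∈ Ω : dist(x, ∂Ω) ≥ ψ(x)}, one has φ_ψ ∗ u ∈ L^p(ω; ℝ^ν), with ‖φ_ψ ∗ u‖_{L^p(ω)} ≤ (1 − ‖Dψ‖_{L^∞(ω)})^{−1/p} ‖u‖_{L^p(Ω)}, and ‖φ_ψ ∗ u − u‖_{L^p(ω)} ≤ sup_{v ∈ B_1^m} ‖τ_{ψv}u − u‖_{L^p(ω)}. -/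
open MeasureTheory Metric Set Filter
open scoped ENNReal Topology Pointwise
open Set.Notation

noncomputable section

/-- The convolution `φ_ψ ∗ u` of `u` with the mollifier `φ` at the variable scale `ψ`:
`(φ_ψ ∗ u)(x) = ∫_{B_1} φ(z) u(x + ψ(x) z) dz`. -/
def mollifyVar {m ν : ℕ} (φ ψ : Euc m → ℝ) (u : Euc m → Euc ν) (x : Euc m) : Euc ν :=
  ∫ z in ball (0 : Euc m) 1, φ z • u (x + ψ x • z)

lemma memA {m : ℕ} {Ω : Set (Euc m)} (hΩ : IsOpen Ω) {x y : Euc m} (hx : x ∈ Ω)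
    (h : edist x y < EMetric.infEdist x (frontier Ω)) : y ∈ Ω := by
  have hdisj : Disjoint (frontier Ω) (segment ℝ x y) := by
    rw [Set.disjoint_left]
    intro w hwf hws
    have h1 : w ∈ closedBall x (dist x y) := by
      have : segment ℝ x y ⊆ closedBall x (dist x y) :=
        (convex_closedBall x (dist x y)).segment_subset (mem_closedBall_self dist_nonneg)
          (by simp [mem_closedBall, dist_comm])
      exact this hws
    have h2 : edist x w ≤ edist x y := by
      rw [edist_dist, edist_dist]
      exact ENNReal.ofReal_le_ofReal (by simpa [mem_closedBall, dist_comm] using h1)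
    exact absurd ((EMetric.infEdist_le_edist_of_mem hwf).trans h2) (not_le.2 h)
  haveI : PreconnectedSpace (segment ℝ x y) :=
    Subtype.preconnectedSpace (convex_segment x y).isPreconnected
  have hclopen : IsClopen ((segment ℝ x y) ↓∩ Ω) := isClopen_preimage_val hΩ hdisj
  have huniv : (segment ℝ x y) ↓∩ Ω = univ :=
    hclopen.eq_univ ⟨⟨x, left_mem_segment ℝ x y⟩, hx⟩
  have : (⟨y, right_mem_segment ℝ x y⟩ : segment ℝ x y) ∈ (segment ℝ x y) ↓∩ Ω := by
    rw [huniv]; trivial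
  exact this

lemma memB {m : ℕ} {Ω : Set (Euc m)} (hΩ : IsOpen Ω) {ψ : Euc m → ℝ} {x : Euc m}
    (hx : x ∈ Ω) (hψ0 : 0 ≤ ψ x) (hd : ENNReal.ofReal (ψ x) ≤ EMetric.infEdist x (frontier Ω))
    {z : Euc m} (hz : z ∈ ball (0 : Euc m) 1) : x + ψ x • z ∈ Ω := by
  rcases eq_or_lt_of_le hψ0 with h0 | hpos
  · simpa [← h0] using hx
  · apply memA hΩ hx
    have hzn : ‖z‖ < 1 := by simpa using hz
    have he : edist x (x + ψ x • z) = ENNReal.ofReal (ψ x * ‖z‖) := by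
      rw [edist_dist, dist_self_add_right, norm_smul, Real.norm_eq_abs, abs_of_nonneg hψ0]
    rw [he]
    refine lt_of_lt_of_le ?_ hd
    rw [ENNReal.ofReal_lt_ofReal_iff hpos]
    nlinarith [norm_nonneg z]

lemma derivD {m : ℕ} {Ω : Set (Euc m)} (hΩ : IsOpen Ω) {ψ : Euc m → ℝ}
    (hψ : ContDiffOn ℝ (⊤ : ℕ∞) ψ Ω) {x : Euc m} (hx : x ∈ Ω) (z : Euc m) :
    HasFDerivAt (fun y => y + ψ y • z)
      (ContinuousLinearMap.id ℝ (Euc m) + (fderiv ℝ ψ x).smulRight z) x := by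
  have hd : DifferentiableAt ℝ ψ x :=
    ((hψ.differentiableOn (by simp)).differentiableAt (hΩ.mem_nhds hx))
  have h1 : HasFDerivAt (fun y => ψ y • z) ((fderiv ℝ ψ x).smulRight z) x := by
    exact hd.hasFDerivAt.smul_const z
  exact (hasFDerivAt_id x).add h1

lemma injC {m : ℕ} {Ω : Set (Euc m)} (hΩ : IsOpen Ω) {ψ : Euc m → ℝ}
    (hψ : ContDiffOn ℝ (⊤ : ℕ∞) ψ Ω) (hψpos : ∀ x ∈ Ω, 0 ≤ ψ x)
    {L : ℝ} (hL : L < 1) (hψL : ∀ x ∈ Ω, ‖fderiv ℝ ψ x‖ ≤ L)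
    {ω : Set (Euc m)}
    (hωΩ : ∀ x ∈ ω, x ∈ Ω ∧ ENNReal.ofReal (ψ x) ≤ EMetric.infEdist x (frontier Ω))
    {z : Euc m} (hz : z ∈ ball (0 : Euc m) 1) :
    Set.InjOn (fun y => y + ψ y • z) ω := by
  have hzn : ‖z‖ < 1 := by simpa using hz
  have key : ∀ x ∈ ω, ∀ y ∈ ω, (x + ψ x • z = y + ψ y • z) → ψ x ≤ ψ y → x = y := by
    intro x hx y hy heq hle
    have hxy : x - y = (ψ y - ψ x) • z := by
      rw [sub_smul]
      linear_combination (norm := module) heq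
    rcases eq_or_lt_of_le hle with h0 | hlt
    · rw [h0, sub_self, zero_smul] at hxy
      exact sub_eq_zero.mp hxy
    · exfalso
      set c := ψ y - ψ x with hc
      have hcpos : 0 < c := by simp only [hc]; linarith
      have hnxy : ‖x - y‖ = c * ‖z‖ := by
        rw [hxy, norm_smul, Real.norm_eq_abs, abs_of_pos hcpos]
      have hψy : 0 < ψ y := lt_of_le_of_lt (hψpos x (hωΩ x hx).1) hlt
      have hxball : x ∈ ball y (ψ y) := by
        rw [mem_ball, dist_eq_norm]
        calc ‖x - y‖ = c * ‖z‖ := hnxy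
        _ < c := by nlinarith
        _ ≤ ψ y := by have := hψpos x (hωΩ x hx).1; simp only [hc]; linarith
      have hball : ball y (ψ y) ⊆ Ω := by
        intro w hw
        apply memA hΩ (hωΩ y hy).1
        refine lt_of_lt_of_le ?_ (hωΩ y hy).2
        rw [edist_dist, dist_comm]
        exact (ENNReal.ofReal_lt_ofReal_iff hψy).mpr hw
      have hdiff : DifferentiableOn ℝ ψ (ball y (ψ y)) :=
        (hψ.differentiableOn (by simp)).mono hball
      have hbound : ∀ w ∈ ball y (ψ y), ‖fderivWithin ℝ ψ (ball y (ψ y)) w‖ ≤ L := by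
        intro w hw
        rw [fderivWithin_of_isOpen isOpen_ball hw]
        exact hψL w (hball hw)
      have hlip := (convex_ball y (ψ y)).norm_image_sub_le_of_norm_fderivWithin_le
        hdiff hbound (mem_ball_self hψy) hxball
      rw [Real.norm_eq_abs, abs_sub_comm, ← hc, abs_of_pos hcpos, hnxy] at hlip
      nlinarith [norm_nonneg z, mul_pos hcpos (sub_pos.2 hzn), mul_pos hcpos (sub_pos.2 hL)]
  intro x hx y hy heq
  rcases le_total (ψ x) (ψ y) with h | h
  · exact key x hx y hy heq h
  · exact (key y hy x hx heq.symm h).symm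

lemma detE {E : Type*} [NormedAddCommGroup E] [NormedSpace ℝ E] [FiniteDimensional ℝ E]
    (ℓ : E →L[ℝ] ℝ) (z : E) :
    (ContinuousLinearMap.id ℝ E + ℓ.smulRight z).det = 1 + ℓ z := by
  classical
  set b := Module.finBasis ℝ E
  have hcoe : ((ContinuousLinearMap.id ℝ E + ℓ.smulRight z : E →L[ℝ] E) : E →ₗ[ℝ] E)
      = LinearMap.id + (ℓ : E →ₗ[ℝ] ℝ).smulRight z := by
    ext x; simp
  rw [ContinuousLinearMap.det, hcoe, ← LinearMap.det_toMatrix b]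
  have hM : LinearMap.toMatrix b b (LinearMap.id + (ℓ : E →ₗ[ℝ] ℝ).smulRight z)
      = 1 + Matrix.replicateCol Unit (fun i => b.repr z i) * Matrix.replicateRow Unit (fun j => ℓ (b j)) := by
    ext i j
    simp [LinearMap.toMatrix_apply, Matrix.mul_apply, Matrix.one_apply, _root_.map_smul,
      Module.Basis.repr_self, Finsupp.single_apply, mul_comm, eq_comm]
  rw [hM, Matrix.det_one_add_replicateCol_mul_replicateRow]
  congr 1
  conv_rhs => rw [← b.sum_repr z]
  simp [dotProduct, map_sum, _root_.map_smul, mul_comm]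
  conv_rhs => rw [← b.sum_repr z]
  rw [map_sum]
  exact Finset.sum_congr rfl fun i _ => by rw [_root_.map_smul, smul_eq_mul, mul_comm]

lemma covF {m : ℕ} {Ω ω : Set (Euc m)} (hΩ : IsOpen Ω) (hω : IsOpen ω) {ψ : Euc m → ℝ}
    (hψ : ContDiffOn ℝ (⊤ : ℕ∞) ψ Ω) (hψpos : ∀ x ∈ Ω, 0 ≤ ψ x)
    {L : ℝ} (hL : L < 1) (hψL : ∀ x ∈ Ω, ‖fderiv ℝ ψ x‖ ≤ L)
    (hωΩ : ∀ x ∈ ω, x ∈ Ω ∧ ENNReal.ofReal (ψ x) ≤ EMetric.infEdist x (frontier Ω))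
    {z : Euc m} (hz : z ∈ ball (0 : Euc m) 1)
    {Lω : ℝ} (hLω1 : Lω < 1) (hb : ∀ x ∈ ω, ‖fderiv ℝ ψ x‖ ≤ Lω)
    (g : Euc m → ℝ≥0∞) :
    ∫⁻ x in ω, g (x + ψ x • z) ≤ ENNReal.ofReal (1 - Lω)⁻¹ * ∫⁻ y in Ω, g y := by
  have hzn : ‖z‖ < 1 := by simpa using hz
  set A : Euc m → (Euc m →L[ℝ] Euc m) :=
    fun x => ContinuousLinearMap.id ℝ (Euc m) + (fderiv ℝ ψ x).smulRight z with hA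
  have hf' : ∀ x ∈ ω, HasFDerivWithinAt (fun y => y + ψ y • z) (A x) ω x :=
    fun x hx => (derivD hΩ hψ (hωΩ x hx).1 z).hasFDerivWithinAt
  have hinj := injC hΩ hψ hψpos hL hψL hωΩ hz
  have hcov := lintegral_image_eq_lintegral_abs_det_fderiv_mul volume hω.measurableSet hf' hinj g
  have himg : (fun y => y + ψ y • z) '' ω ⊆ Ω := by
    rintro _ ⟨x, hx, rfl⟩
    exact memB hΩ (hωΩ x hx).1 (hψpos x (hωΩ x hx).1) (hωΩ x hx).2 hz
  have hdet : ∀ x ∈ ω, ENNReal.ofReal (1 - Lω) ≤ ENNReal.ofReal |(A x).det| := by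
    intro x hx
    apply ENNReal.ofReal_le_ofReal
    rw [hA, detE]
    have h1 : |fderiv ℝ ψ x z| ≤ Lω := by
      calc |fderiv ℝ ψ x z| ≤ ‖fderiv ℝ ψ x‖ * ‖z‖ := (fderiv ℝ ψ x).le_opNorm z
      _ ≤ Lω := by nlinarith [norm_nonneg (fderiv ℝ ψ x), hb x hx, norm_nonneg z]
    rw [abs_le] at h1
    rw [le_abs]
    left; linarith
  set c := ENNReal.ofReal (1 - Lω) with hcdef
  have hc0 : c ≠ 0 := by simp [hcdef, ENNReal.ofReal_eq_zero]; linarith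
  have hctop : c ≠ ⊤ := ENNReal.ofReal_ne_top
  have hmain : c * ∫⁻ x in ω, g (x + ψ x • z) ≤ ∫⁻ y in Ω, g y := by
    calc c * ∫⁻ x in ω, g (x + ψ x • z) = ∫⁻ x in ω, c * g (x + ψ x • z) :=
          (lintegral_const_mul' c _ hctop).symm
    _ ≤ ∫⁻ x in ω, ENNReal.ofReal |(A x).det| * g (x + ψ x • z) := by
        refine lintegral_mono_ae ?_
        filter_upwards [ae_restrict_mem hω.measurableSet] with x hx
        exact mul_le_mul_left (hdet x hx) _
    _ = ∫⁻ y in (fun y => y + ψ y • z) '' ω, g y := hcov.symm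
    _ ≤ ∫⁻ y in Ω, g y := lintegral_mono' (Measure.restrict_mono himg le_rfl) le_rfl
  calc ∫⁻ x in ω, g (x + ψ x • z) = c⁻¹ * (c * ∫⁻ x in ω, g (x + ψ x • z)) := by
        rw [← mul_assoc, ENNReal.inv_mul_cancel hc0 hctop, one_mul]
  _ ≤ c⁻¹ * ∫⁻ y in Ω, g y := mul_le_mul_right hmain _
  _ = ENNReal.ofReal (1 - Lω)⁻¹ * ∫⁻ y in Ω, g y := by
      rw [hcdef, ← ENNReal.ofReal_inv_of_pos (by linarith)]

lemma holderH {α : Type*} [MeasurableSpace α] (μ : Measure α) {φ : α → ℝ≥0∞}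
    (hφm : AEMeasurable φ μ) (hφ1 : ∫⁻ z, φ z ∂μ = 1)
    {h : α → ℝ≥0∞} (hh : AEMeasurable h μ) {p : ℝ} (hp : 1 ≤ p) :
    ∫⁻ z, φ z * h z ∂μ ≤ (∫⁻ z, φ z * h z ^ p ∂μ) ^ (1 / p) := by
  rcases eq_or_lt_of_le hp with h1 | h1
  · simp [← h1]
  · have hpq : p.HolderConjugate (Real.conjExponent p) := Real.HolderConjugate.conjExponent h1
    set q := Real.conjExponent p with hq
    have hq0 : 0 < q := hpq.symm.pos
    have hp0 : 0 < p := hpq.pos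
    have key := ENNReal.lintegral_mul_le_Lp_mul_Lq μ hpq.symm
      (f := fun z => φ z ^ (1 / q)) (g := fun z => φ z ^ (1 / p) * h z)
      ((ENNReal.continuous_rpow_const.measurable.comp_aemeasurable hφm))
      (((ENNReal.continuous_rpow_const.measurable.comp_aemeasurable hφm)).mul hh)
    have e1 : ∀ z, φ z ^ (1 / q) * (φ z ^ (1 / p) * h z) = φ z * h z := by
      intro z
      rw [← mul_assoc, ← ENNReal.rpow_add_of_nonneg _ _ (by positivity) (by positivity),
        one_div, one_div, add_comm, hpq.inv_add_inv_eq_one, ENNReal.rpow_one]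
    have e2 : ∀ z, (φ z ^ (1 / q)) ^ q = φ z := by
      intro z
      rw [← ENNReal.rpow_mul, one_div, inv_mul_cancel₀ hq0.ne', ENNReal.rpow_one]
    have e3 : ∀ z, (φ z ^ (1 / p) * h z) ^ p = φ z * h z ^ p := by
      intro z
      rw [ENNReal.mul_rpow_of_nonneg _ _ hp0.le, ← ENNReal.rpow_mul, one_div,
        inv_mul_cancel₀ hp0.ne', ENNReal.rpow_one]
    simp only [Pi.mul_apply, e1, e2, e3] at key
    rwa [hφ1, ENNReal.one_rpow, one_mul] at key

lemma jensenJ {ν : ℕ} {α : Type*} [MeasurableSpace α] (μ : Measure α) {φr : α → ℝ}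
    (hφpos : ∀ z, 0 ≤ φr z)
    (hφm : AEMeasurable (fun z => ENNReal.ofReal (φr z)) μ)
    (hφ1 : ∫⁻ z, ENNReal.ofReal (φr z) ∂μ = 1)
    {w : α → Euc ν} (hw : AEMeasurable (fun z => (‖w z‖₊ : ℝ≥0∞)) μ)
    {p : ℝ} (hp : 1 ≤ p) :
    (‖∫ z, φr z • w z ∂μ‖₊ : ℝ≥0∞) ^ p
      ≤ ∫⁻ z, ENNReal.ofReal (φr z) * (‖w z‖₊ : ℝ≥0∞) ^ p ∂μ := by
  have hp0 : 0 < p := lt_of_lt_of_le zero_lt_one hp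
  by_cases hint : Integrable (fun z => φr z • w z) μ
  · have step1 : (‖∫ z, φr z • w z ∂μ‖₊ : ℝ≥0∞)
        ≤ ∫⁻ z, ENNReal.ofReal (φr z) * (‖w z‖₊ : ℝ≥0∞) ∂μ := by
      refine le_trans (enorm_integral_le_lintegral_enorm _) (le_of_eq ?_)
      refine lintegral_congr fun z => ?_
      rw [enorm_smul, Real.enorm_eq_ofReal (hφpos z)]; rfl
    have step2 := holderH μ hφm hφ1 hw hp
    calc (‖∫ z, φr z • w z ∂μ‖₊ : ℝ≥0∞) ^ p
        ≤ ((∫⁻ z, ENNReal.ofReal (φr z) * (‖w z‖₊ : ℝ≥0∞) ^ p ∂μ) ^ (1 / p)) ^ p :=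
          ENNReal.rpow_le_rpow (step1.trans step2) hp0.le
      _ = ∫⁻ z, ENNReal.ofReal (φr z) * (‖w z‖₊ : ℝ≥0∞) ^ p ∂μ := by
          rw [← ENNReal.rpow_mul, one_div, inv_mul_cancel₀ hp0.ne', ENNReal.rpow_one]
  · rw [integral_undef hint]
    simp [ENNReal.zero_rpow_of_pos hp0]

set_option maxHeartbeats 2000000 in
/-- adaptive smoothing, `L^p` estimates: if `φ` is a mollifier and
`ψ ∈ C^∞(Ω)` is nonnegative with `‖Dψ‖_{L^∞(Ω)} < 1`, then for every `u ∈ L^p(Ω; ℝ^ν)` and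
every open set `ω ⊆ {x ∈ Ω : dist(x, ∂Ω) ≥ ψ(x)}` one has `φ_ψ ∗ u ∈ L^p(ω; ℝ^ν)`, with
`‖φ_ψ ∗ u‖_{L^p(ω)} ≤ (1 - ‖Dψ‖_{L^∞(ω)})^{-1/p} ‖u‖_{L^p(Ω)}` and
`‖φ_ψ ∗ u - u‖_{L^p(ω)} ≤ sup_{v ∈ B_1} ‖τ_{ψv}u - u‖_{L^p(ω)}`. -/
theorem adaptive_smoothing_Lp
    (m ν : ℕ) (p : ℝ) (hp : 1 ≤ p)
    (Ω : Set (Euc m)) (hΩ : IsOpen Ω)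
    (φ : Euc m → ℝ) (hφsmooth : ContDiff ℝ (⊤ : ℕ∞) φ) (hφsupp : HasCompactSupport φ)
    (hφsupp' : tsupport φ ⊆ ball (0 : Euc m) 1)
    (hφpos : ∀ z, 0 ≤ φ z) (hφint : ∫ z in ball (0 : Euc m) 1, φ z = 1)
    (ψ : Euc m → ℝ) (hψsmooth : ContDiffOn ℝ (⊤ : ℕ∞) ψ Ω) (hψpos : ∀ x ∈ Ω, 0 ≤ ψ x)
    (L : ℝ) (hL : L < 1) (hψL : ∀ x ∈ Ω, ‖fderivWithin ℝ ψ Ω x‖ ≤ L)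
    (u : Euc m → Euc ν) (hu : MemLp u (ENNReal.ofReal p) (volume.restrict Ω))
    (ω : Set (Euc m)) (hω : IsOpen ω)
    (hωΩ : ∀ x ∈ ω, x ∈ Ω ∧ ENNReal.ofReal (ψ x) ≤ EMetric.infEdist x (frontier Ω)) :
    MemLp (mollifyVar φ ψ u) (ENNReal.ofReal p) (volume.restrict ω) ∧
    (∀ Lω : ℝ, Lω < 1 → (∀ x ∈ ω, ‖fderivWithin ℝ ψ Ω x‖ ≤ Lω) →
      eLpNorm (mollifyVar φ ψ u) (ENNReal.ofReal p) (volume.restrict ω)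
        ≤ ENNReal.ofReal ((1 - Lω) ^ (-(1 / p))) *
            eLpNorm u (ENNReal.ofReal p) (volume.restrict Ω)) ∧
    eLpNorm (fun x => mollifyVar φ ψ u x - u x) (ENNReal.ofReal p) (volume.restrict ω)
      ≤ ⨆ v ∈ ball (0 : Euc m) 1,
          eLpNorm (fun x => u (x + ψ x • v) - u x) (ENNReal.ofReal p) (volume.restrict ω) := by
  have hp0 : 0 < p := lt_of_lt_of_le zero_lt_one hp
  have hPne : (ENNReal.ofReal p) ≠ 0 := by
    simp only [ne_eq, ENNReal.ofReal_eq_zero, not_le]; linarith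
  have hPtop : (ENNReal.ofReal p) ≠ ∞ := ENNReal.ofReal_ne_top
  have hPto : (ENNReal.ofReal p).toReal = p := ENNReal.toReal_ofReal hp0.le
  have hsub : ω ⊆ Ω := fun x hx => (hωΩ x hx).1
  have hfd : ∀ x ∈ Ω, ‖fderiv ℝ ψ x‖ ≤ L := fun x hx => by
    rw [← fderivWithin_of_isOpen hΩ hx]; exact hψL x hx
  set B := ball (0 : Euc m) 1 with hBdef
  set L' := max L 0 with hL'def
  have hL'1 : L' < 1 := max_lt hL zero_lt_one
  have hL'0 : 0 ≤ L' := le_max_right L 0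
  have hfdL' : ∀ x ∈ ω, ‖fderiv ℝ ψ x‖ ≤ L' :=
    fun x hx => (hfd x (hsub hx)).trans (le_max_left _ _)
  -- measurable representatives
  have hum := hu.1
  set uS := hum.mk u with huSdef
  have huSm : StronglyMeasurable uS := hum.stronglyMeasurable_mk
  have huSe : u =ᵐ[volume.restrict Ω] uS := hum.ae_eq_mk
  have huSeω : u =ᵐ[volume.restrict ω] uS :=
    ae_restrict_of_ae_restrict_of_subset hsub huSe
  have hψm : AEMeasurable ψ (volume.restrict ω) :=
    ((hψsmooth.continuousOn).mono hsub).aemeasurable hω.measurableSet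
  set ψS := hψm.mk ψ with hψSdef
  have hψSm : Measurable ψS := hψm.measurable_mk
  have hψe : ψ =ᵐ[volume.restrict ω] ψS := hψm.ae_eq_mk
  -- null set
  set N : Set (Euc m) := toMeasurable (volume.restrict Ω) {y | u y ≠ uS y} ∩ Ω with hNdef
  have hNmeas : MeasurableSet N := (measurableSet_toMeasurable _ _).inter hΩ.measurableSet
  have hNnull : volume N = 0 := by
    have h1 : (volume.restrict Ω) (toMeasurable (volume.restrict Ω) {y | u y ≠ uS y}) = 0 := by
      rw [measure_toMeasurable]
      exact huSe
    rwa [Measure.restrict_apply (measurableSet_toMeasurable _ _)] at h1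
  have hNsub : ∀ y ∈ Ω, y ∉ N → u y = uS y := by
    intro y hy hyn
    by_contra h
    exact hyn ⟨subset_toMeasurable _ _ h, hy⟩
  set ind : Euc m → ℝ≥0∞ := N.indicator (fun _ => 1) with hinddef
  have hindm : Measurable ind := measurable_const.indicator hNmeas
  have hTm : Measurable (fun q : Euc m × Euc m => q.1 + ψS q.1 • q.2) :=
    measurable_fst.add ((hψSm.comp measurable_fst).smul measurable_snd)
  have hcongrx : ∀ (f : Euc m → ℝ≥0∞) (z : Euc m),
      ∫⁻ x in ω, f (x + ψS x • z) = ∫⁻ x in ω, f (x + ψ x • z) := by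
    intro f z
    refine lintegral_congr_ae (hψe.mono fun x hx => ?_)
    show f (x + ψS x • z) = f (x + ψ x • z)
    rw [hx]
  have hcov : ∀ {Lω : ℝ}, Lω < 1 → (∀ x ∈ ω, ‖fderiv ℝ ψ x‖ ≤ Lω) → ∀ z ∈ B,
      ∀ g : Euc m → ℝ≥0∞,
      ∫⁻ x in ω, g (x + ψS x • z) ≤ ENNReal.ofReal (1 - Lω)⁻¹ * ∫⁻ y in Ω, g y := by
    intro Lω h1 hb z hz g
    rw [hcongrx]
    exact covF hΩ hω hψsmooth hψpos hL hfd hωΩ hz h1 hb g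
  -- double integral of the null indicator vanishes
  have hzero' : ∫⁻ z in B, ∫⁻ x in ω, ind (x + ψS x • z) = 0 := by
    have hbd : ∀ᵐ z ∂(volume.restrict B), ∫⁻ x in ω, ind (x + ψS x • z) = 0 := by
      filter_upwards [ae_restrict_mem measurableSet_ball] with z hz
      have h1 := hcov hL'1 hfdL' z hz ind
      have h2 : ∫⁻ y in Ω, ind y = 0 := by
        rw [hinddef, lintegral_indicator hNmeas, setLIntegral_one]
        refine le_antisymm ?_ (by positivity)
        calc (volume.restrict Ω) N ≤ volume N := Measure.restrict_le_self _
        _ = 0 := hNnull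
      rw [h2, mul_zero] at h1
      exact le_antisymm h1 (by positivity)
    rw [lintegral_congr_ae hbd, lintegral_zero]
  have hzero : ∫⁻ x in ω, ∫⁻ z in B, ind (x + ψS x • z) = 0 := by
    rw [lintegral_lintegral_swap (f := fun x z => ind (x + ψS x • z))
      (((hindm.comp hTm).aemeasurable))]
    exact hzero'
  -- extraction of a.e. facts
  have hgoodx : ∀ᵐ x ∂(volume.restrict ω), ∀ᵐ z ∂(volume.restrict B), (x + ψS x • z) ∉ N := by
    have hm1 : Measurable (fun x => ∫⁻ z in B, ind (x + ψS x • z)) :=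
      Measurable.lintegral_prod_right (f := fun x z => ind (x + ψS x • z)) (hindm.comp hTm)
    have h1 : ∀ᵐ x ∂(volume.restrict ω), ∫⁻ z in B, ind (x + ψS x • z) = 0 :=
      (lintegral_eq_zero_iff' hm1.aemeasurable).mp hzero
    filter_upwards [h1] with x hx
    have hm2 : Measurable (fun z => ind (x + ψS x • z)) :=
      hindm.comp ((measurable_const_smul (ψS x)).const_add x)
    have h2 := (lintegral_eq_zero_iff hm2).mp hx
    filter_upwards [h2] with z hz
    intro hmem
    simp only [hinddef, Set.indicator_of_mem hmem] at hz
    exact one_ne_zero hz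
  have hgoodz : ∀ᵐ z ∂(volume.restrict B), ∀ᵐ x ∂(volume.restrict ω), (x + ψS x • z) ∉ N := by
    have h1 : ∀ᵐ z ∂(volume.restrict B), ∫⁻ x in ω, ind (x + ψS x • z) = 0 := by
      have hm1 : Measurable (fun z => ∫⁻ x in ω, ind (x + ψS x • z)) := by
        refine Measurable.lintegral_prod_right (f := fun z x => ind (x + ψS x • z)) ?_
        exact hindm.comp (measurable_snd.add ((hψSm.comp measurable_snd).smul measurable_fst))
      exact (lintegral_eq_zero_iff' hm1.aemeasurable).mp hzero'
    filter_upwards [h1] with z hz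
    have hm2 : Measurable (fun x => ind (x + ψS x • z)) :=
      hindm.comp (measurable_id.add (hψSm.smul_const z))
    have h2 := (lintegral_eq_zero_iff hm2).mp hz
    filter_upwards [h2] with x hx
    intro hmem
    simp only [hinddef, Set.indicator_of_mem hmem] at hx
    exact one_ne_zero hx
  have hmem : ∀ᵐ x ∂(volume.restrict ω), x ∈ ω := ae_restrict_mem hω.measurableSet
  have hTΩ : ∀ x ∈ ω, ∀ z ∈ B, x + ψ x • z ∈ Ω := fun x hx z hz =>
    memB hΩ (hsub hx) (hψpos x (hsub hx)) (hωΩ x hx).2 hz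
  have hUT : ∀ᵐ x ∂(volume.restrict ω), ∀ᵐ z ∂(volume.restrict B),
      u (x + ψ x • z) = uS (x + ψS x • z) := by
    filter_upwards [hgoodx, hψe, hmem] with x hx1 hx2 hx3
    filter_upwards [hx1, ae_restrict_mem measurableSet_ball] with z hz1 hz2
    rw [← hx2] at hz1 ⊢
    exact hNsub _ (hTΩ x hx3 z hz2) hz1
  have hmoll : ∀ᵐ x ∂(volume.restrict ω),
      mollifyVar φ ψ u x = ∫ z in B, φ z • uS (x + ψS x • z) := by
    filter_upwards [hUT] with x hx
    refine integral_congr_ae (hx.mono fun z hz => ?_)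
    show φ z • u (x + ψ x • z) = φ z • uS (x + ψS x • z)
    rw [hz]
  -- mollifier facts
  have hφc : Continuous φ := hφsmooth.continuous
  have hφint' : Integrable φ (volume.restrict B) :=
    (hφc.integrable_of_hasCompactSupport hφsupp).restrict
  have hφ1 : ∫⁻ z in B, ENNReal.ofReal (φ z) = 1 := by
    rw [← ofReal_integral_eq_lintegral_ofReal hφint' (Eventually.of_forall hφpos), hφint,
      ENNReal.ofReal_one]
  have hφm : AEMeasurable (fun z => ENNReal.ofReal (φ z)) (volume.restrict B) :=
    (ENNReal.measurable_ofReal.comp hφc.measurable).aemeasurable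
  have huSmeas : Measurable uS := huSm.measurable
  -- finiteness of the Lp norm of u
  have hXeq : ∫⁻ y in Ω, (‖u y‖₊ : ℝ≥0∞) ^ p
      = (eLpNorm u (ENNReal.ofReal p) (volume.restrict Ω)) ^ p := by
    rw [eLpNorm_eq_lintegral_rpow_enorm_toReal hPne hPtop, hPto, ← ENNReal.rpow_mul, one_div,
      inv_mul_cancel₀ hp0.ne', ENNReal.rpow_one]
    rfl
  have hXfin : ∫⁻ y in Ω, (‖u y‖₊ : ℝ≥0∞) ^ p ≠ ∞ := by
    rw [hXeq]
    exact (ENNReal.rpow_lt_top_of_nonneg hp0.le hu.2.ne).ne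
  have hXS : ∫⁻ y in Ω, (‖uS y‖₊ : ℝ≥0∞) ^ p = ∫⁻ y in Ω, (‖u y‖₊ : ℝ≥0∞) ^ p := by
    refine lintegral_congr_ae (huSe.mono fun y hy => ?_)
    show (‖uS y‖₊ : ℝ≥0∞) ^ p = (‖u y‖₊ : ℝ≥0∞) ^ p
    rw [hy]
  -- the key middle estimate
  have hmidswap : ∫⁻ x in ω, ∫⁻ z in B,
        ENNReal.ofReal (φ z) * ((‖uS (x + ψS x • z)‖₊ : ℝ≥0∞)) ^ p
      = ∫⁻ z in B, ∫⁻ x in ω,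
        ENNReal.ofReal (φ z) * ((‖uS (x + ψS x • z)‖₊ : ℝ≥0∞)) ^ p := by
    refine lintegral_lintegral_swap
      (f := fun x z => ENNReal.ofReal (φ z) * ((‖uS (x + ψS x • z)‖₊ : ℝ≥0∞)) ^ p) ?_
    refine Measurable.aemeasurable ?_
    exact ((ENNReal.measurable_ofReal.comp (hφc.measurable.comp measurable_snd)).mul
      (ENNReal.continuous_rpow_const.measurable.comp (huSmeas.comp hTm).enorm))
  have hmid : ∀ {Lω : ℝ}, Lω < 1 → (∀ x ∈ ω, ‖fderiv ℝ ψ x‖ ≤ Lω) →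
      ∫⁻ x in ω, ∫⁻ z in B, ENNReal.ofReal (φ z) * ((‖uS (x + ψS x • z)‖₊ : ℝ≥0∞)) ^ p
        ≤ ENNReal.ofReal (1 - Lω)⁻¹ * ∫⁻ y in Ω, (‖u y‖₊ : ℝ≥0∞) ^ p := by
    intro Lω hLω1 hbω
    rw [hmidswap]
    have hKne : ENNReal.ofReal (1 - Lω)⁻¹ * ∫⁻ y in Ω, (‖uS y‖₊ : ℝ≥0∞) ^ p ≠ ∞ := by
      rw [hXS]
      exact (ENNReal.mul_lt_top ENNReal.ofReal_lt_top hXfin.lt_top).ne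
    calc ∫⁻ z in B, ∫⁻ x in ω, ENNReal.ofReal (φ z) * ((‖uS (x + ψS x • z)‖₊ : ℝ≥0∞)) ^ p
        = ∫⁻ z in B, ENNReal.ofReal (φ z)
            * ∫⁻ x in ω, ((‖uS (x + ψS x • z)‖₊ : ℝ≥0∞)) ^ p := by
          refine lintegral_congr fun z => ?_
          exact lintegral_const_mul' _ _ ENNReal.ofReal_ne_top
      _ ≤ ∫⁻ z in B, ENNReal.ofReal (φ z)
            * (ENNReal.ofReal (1 - Lω)⁻¹ * ∫⁻ y in Ω, (‖uS y‖₊ : ℝ≥0∞) ^ p) := by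
          refine lintegral_mono_ae ?_
          filter_upwards [ae_restrict_mem measurableSet_ball] with z hz
          exact mul_le_mul_right (hcov hLω1 hbω z hz (fun y => ((‖uS y‖₊ : ℝ≥0∞)) ^ p)) _
      _ = (∫⁻ z in B, ENNReal.ofReal (φ z))
            * (ENNReal.ofReal (1 - Lω)⁻¹ * ∫⁻ y in Ω, (‖uS y‖₊ : ℝ≥0∞) ^ p) :=
          lintegral_mul_const' _ _ hKne
      _ = ENNReal.ofReal (1 - Lω)⁻¹ * ∫⁻ y in Ω, (‖u y‖₊ : ℝ≥0∞) ^ p := by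
          rw [hφ1, one_mul, hXS]
  have hjen : ∀ x : Euc m, (‖∫ z in B, φ z • uS (x + ψS x • z)‖₊ : ℝ≥0∞) ^ p
      ≤ ∫⁻ z in B, ENNReal.ofReal (φ z) * ((‖uS (x + ψS x • z)‖₊ : ℝ≥0∞)) ^ p := by
    intro x
    refine jensenJ _ hφpos hφm hφ1 ?_ hp
    exact ((huSmeas.comp ((measurable_const_smul (ψS x)).const_add x)).enorm).aemeasurable
  have chain : ∀ {Lω : ℝ}, Lω < 1 → (∀ x ∈ ω, ‖fderiv ℝ ψ x‖ ≤ Lω) →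
      ∫⁻ x in ω, ((‖mollifyVar φ ψ u x‖₊ : ℝ≥0∞)) ^ p
        ≤ ENNReal.ofReal (1 - Lω)⁻¹ * ∫⁻ y in Ω, (‖u y‖₊ : ℝ≥0∞) ^ p := by
    intro Lω hLω1 hbω
    have s1 : ∫⁻ x in ω, ((‖mollifyVar φ ψ u x‖₊ : ℝ≥0∞)) ^ p
        = ∫⁻ x in ω, ((‖∫ z in B, φ z • uS (x + ψS x • z)‖₊ : ℝ≥0∞)) ^ p := by
      refine lintegral_congr_ae (hmoll.mono fun x hx => ?_)
      show ((‖mollifyVar φ ψ u x‖₊ : ℝ≥0∞)) ^ p = _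
      rw [hx]
    rw [s1]
    exact le_trans (lintegral_mono hjen) (hmid hLω1 hbω)
  -- Part 1
  have hconv_meas : AEStronglyMeasurable (mollifyVar φ ψ u) (volume.restrict ω) := by
    have hFsm : StronglyMeasurable (fun q : Euc m × Euc m => φ q.2 • uS (q.1 + ψS q.1 • q.2)) :=
      ((hφc.measurable.comp measurable_snd).smul (huSmeas.comp hTm)).stronglyMeasurable
    have hsm : StronglyMeasurable
        (fun x => ∫ z, φ z • uS (x + ψS x • z) ∂(volume.restrict B)) :=
      hFsm.integral_prod_right'
    exact hsm.aestronglyMeasurable.congr (hmoll.mono fun x hx => hx.symm)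
  have hmemp : MemLp (mollifyVar φ ψ u) (ENNReal.ofReal p) (volume.restrict ω) := by
    refine ⟨hconv_meas, ?_⟩
    rw [eLpNorm_eq_lintegral_rpow_enorm_toReal hPne hPtop, hPto]
    refine ENNReal.rpow_lt_top_of_nonneg (by positivity) ?_
    exact ((chain hL'1 hfdL').trans_lt
      (ENNReal.mul_lt_top ENNReal.ofReal_lt_top hXfin.lt_top)).ne
  refine ⟨hmemp, ?_, ?_⟩
  · -- Part 2
    intro Lω hLω1 hbω'
    have hbω : ∀ x ∈ ω, ‖fderiv ℝ ψ x‖ ≤ Lω := fun x hx => by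
      rw [← fderivWithin_of_isOpen hΩ (hsub hx)]; exact hbω' x hx
    rcases Set.eq_empty_or_nonempty ω with rfl | ⟨x0, hx0⟩
    · simp [Measure.restrict_empty, eLpNorm_measure_zero]
    · have hLω0 : 0 ≤ Lω := le_trans (norm_nonneg _) (hbω x0 hx0)
      have h1Lω : 0 < 1 - Lω := by linarith
      rw [eLpNorm_eq_lintegral_rpow_enorm_toReal hPne hPtop, hPto]
      calc (∫⁻ x in ω, ((‖mollifyVar φ ψ u x‖₊ : ℝ≥0∞)) ^ p) ^ (1 / p)
          ≤ (ENNReal.ofReal (1 - Lω)⁻¹ * ∫⁻ y in Ω, (‖u y‖₊ : ℝ≥0∞) ^ p) ^ (1 / p) :=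
            ENNReal.rpow_le_rpow (chain hLω1 hbω) (by positivity)
        _ = (ENNReal.ofReal (1 - Lω)⁻¹) ^ (1 / p)
              * (∫⁻ y in Ω, (‖u y‖₊ : ℝ≥0∞) ^ p) ^ (1 / p) :=
            ENNReal.mul_rpow_of_nonneg _ _ (by positivity)
        _ = ENNReal.ofReal ((1 - Lω) ^ (-(1 / p)))
              * eLpNorm u (ENNReal.ofReal p) (volume.restrict Ω) := by
            congr 1
            · rw [Real.rpow_neg h1Lω.le, ← Real.inv_rpow h1Lω.le,
                ENNReal.ofReal_rpow_of_nonneg (by positivity) (by positivity)]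
            · rw [hXeq, ← ENNReal.rpow_mul, mul_one_div, div_self hp0.ne',
                ENNReal.rpow_one]
  · -- Part 3
    set S := ⨆ v ∈ ball (0 : Euc m) 1,
      eLpNorm (fun x => u (x + ψ x • v) - u x) (ENNReal.ofReal p) (volume.restrict ω) with hSdef
    by_cases hStop : S = ∞
    · rw [hStop]; exact le_top
    have hA : ∀ᵐ x ∂(volume.restrict ω),
        ∫⁻ z in B, ENNReal.ofReal (φ z) * ((‖uS (x + ψS x • z)‖₊ : ℝ≥0∞)) ^ p < ∞ := by
      refine ae_lt_top' ?_ ?_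
      · refine Measurable.aemeasurable ?_
        refine Measurable.lintegral_prod_right
          (f := fun x z => ENNReal.ofReal (φ z) * ((‖uS (x + ψS x • z)‖₊ : ℝ≥0∞)) ^ p) ?_
        exact ((ENNReal.measurable_ofReal.comp (hφc.measurable.comp measurable_snd)).mul
          (ENNReal.continuous_rpow_const.measurable.comp (huSmeas.comp hTm).enorm))
      · exact ((hmid hL'1 hfdL').trans_lt
          (ENNReal.mul_lt_top ENNReal.ofReal_lt_top hXfin.lt_top)).ne
    have hsplit : ∀ᵐ x ∂(volume.restrict ω),
        mollifyVar φ ψ u x - u x = ∫ z in B, φ z • (u (x + ψ x • z) - u x) := by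
      filter_upwards [hUT, hA, hψe] with x hx1 hx2 hx3
      have hslice : Measurable (fun z => φ z • uS (x + ψS x • z)) :=
        hφc.measurable.smul (huSmeas.comp ((measurable_const_smul (ψS x)).const_add x))
      have hi1 : Integrable (fun z => φ z • u (x + ψ x • z)) (volume.restrict B) := by
        constructor
        · refine hslice.stronglyMeasurable.aestronglyMeasurable.congr ?_
          refine hx1.mono fun z hz => ?_
          show φ z • uS (x + ψS x • z) = φ z • u (x + ψ x • z)
          rw [hz]
        · rw [hasFiniteIntegral_def]
          simp only [enorm_eq_nnnorm]
          have he : ∫⁻ z in B, (‖φ z • u (x + ψ x • z)‖₊ : ℝ≥0∞)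
              = ∫⁻ z in B, ENNReal.ofReal (φ z) * (‖uS (x + ψS x • z)‖₊ : ℝ≥0∞) := by
            refine lintegral_congr_ae (hx1.mono fun z hz => ?_)
            show (‖φ z • u (x + ψ x • z)‖₊ : ℝ≥0∞) = _
            rw [hz, nnnorm_smul, ENNReal.coe_mul, ← enorm_eq_nnnorm (φ z), Real.enorm_eq_ofReal (hφpos z)]
          rw [he]
          refine lt_of_le_of_lt (holderH _ hφm hφ1 ?_ hp) ?_
          · exact ((huSmeas.comp
              ((measurable_const_smul (ψS x)).const_add x)).enorm).aemeasurable
          · exact ENNReal.rpow_lt_top_of_nonneg (by positivity) hx2.ne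
      have hi2 : Integrable (fun z => φ z • u x) (volume.restrict B) :=
        hφint'.smul_const (u x)
      have hs : ∫ z in B, φ z • (u (x + ψ x • z) - u x)
          = (∫ z in B, φ z • u (x + ψ x • z)) - ∫ z in B, φ z • u x := by
        simp_rw [smul_sub]
        exact integral_sub hi1 hi2
      rw [hs, integral_smul_const, hφint, one_smul]
      rfl
    have hdiffle : ∀ᵐ x ∂(volume.restrict ω), ((‖mollifyVar φ ψ u x - u x‖₊ : ℝ≥0∞)) ^ p
        ≤ ∫⁻ z in B, ENNReal.ofReal (φ z)
            * ((‖uS (x + ψS x • z) - uS x‖₊ : ℝ≥0∞)) ^ p := by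
      filter_upwards [hsplit, hUT, huSeω] with x h1 h2 h5
      rw [h1]
      have hcong : (fun z => φ z • (u (x + ψ x • z) - u x))
          =ᵐ[volume.restrict B] (fun z => φ z • (uS (x + ψS x • z) - uS x)) := by
        refine h2.mono fun z hz => ?_
        show φ z • (u (x + ψ x • z) - u x) = φ z • (uS (x + ψS x • z) - uS x)
        rw [hz, h5]
      rw [integral_congr_ae hcong]
      refine jensenJ _ hφpos hφm hφ1 ?_ hp
      exact (((huSmeas.comp ((measurable_const_smul (ψS x)).const_add x)).sub
        measurable_const).enorm).aemeasurable
    have hVm : Measurable (fun q : Euc m × Euc m =>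
        ENNReal.ofReal (φ q.2) * ((‖uS (q.1 + ψS q.1 • q.2) - uS q.1‖₊ : ℝ≥0∞)) ^ p) :=
      ((ENNReal.measurable_ofReal.comp (hφc.measurable.comp measurable_snd)).mul
        (ENNReal.continuous_rpow_const.measurable.comp
          ((huSmeas.comp hTm).sub (huSmeas.comp measurable_fst)).enorm))
    have hSpfin : S ^ p ≠ ∞ :=
      (ENNReal.rpow_lt_top_of_nonneg hp0.le hStop).ne
    have hperz : ∀ᵐ z ∂(volume.restrict B),
        ∫⁻ x in ω, ((‖uS (x + ψS x • z) - uS x‖₊ : ℝ≥0∞)) ^ p ≤ S ^ p := by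
      filter_upwards [hgoodz, ae_restrict_mem measurableSet_ball] with z hz1 hz2
      have hcx : ∫⁻ x in ω, ((‖uS (x + ψS x • z) - uS x‖₊ : ℝ≥0∞)) ^ p
          = ∫⁻ x in ω, ((‖u (x + ψ x • z) - u x‖₊ : ℝ≥0∞)) ^ p := by
        refine lintegral_congr_ae ?_
        filter_upwards [hz1, hψe, huSeω, hmem] with x h1 h2 h3 h4
        show ((‖uS (x + ψS x • z) - uS x‖₊ : ℝ≥0∞)) ^ p = _
        rw [← h2] at h1 ⊢
        rw [hNsub _ (hTΩ x h4 z hz2) h1, h3]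
      rw [hcx]
      have heq : ∫⁻ x in ω, ((‖u (x + ψ x • z) - u x‖₊ : ℝ≥0∞)) ^ p
          = (eLpNorm (fun x => u (x + ψ x • z) - u x)
              (ENNReal.ofReal p) (volume.restrict ω)) ^ p := by
        rw [eLpNorm_eq_lintegral_rpow_enorm_toReal hPne hPtop, hPto, ← ENNReal.rpow_mul, one_div,
          inv_mul_cancel₀ hp0.ne', ENNReal.rpow_one]
        rfl
      rw [heq]
      refine ENNReal.rpow_le_rpow ?_ hp0.le
      exact le_biSup (fun v => eLpNorm (fun x => u (x + ψ x • v) - u x)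
        (ENNReal.ofReal p) (volume.restrict ω)) hz2
    rw [eLpNorm_eq_lintegral_rpow_enorm_toReal hPne hPtop, hPto]
    have hfinal : ∫⁻ x in ω, ((‖mollifyVar φ ψ u x - u x‖₊ : ℝ≥0∞)) ^ p ≤ S ^ p := by
      calc ∫⁻ x in ω, ((‖mollifyVar φ ψ u x - u x‖₊ : ℝ≥0∞)) ^ p
          ≤ ∫⁻ x in ω, ∫⁻ z in B, ENNReal.ofReal (φ z)
              * ((‖uS (x + ψS x • z) - uS x‖₊ : ℝ≥0∞)) ^ p := lintegral_mono_ae hdiffle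
        _ = ∫⁻ z in B, ∫⁻ x in ω, ENNReal.ofReal (φ z)
              * ((‖uS (x + ψS x • z) - uS x‖₊ : ℝ≥0∞)) ^ p :=
            lintegral_lintegral_swap (f := fun x z => ENNReal.ofReal (φ z)
              * ((‖uS (x + ψS x • z) - uS x‖₊ : ℝ≥0∞)) ^ p) hVm.aemeasurable
        _ = ∫⁻ z in B, ENNReal.ofReal (φ z)
              * ∫⁻ x in ω, ((‖uS (x + ψS x • z) - uS x‖₊ : ℝ≥0∞)) ^ p := by
            refine lintegral_congr fun z => ?_
            exact lintegral_const_mul' _ _ ENNReal.ofReal_ne_top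
        _ ≤ ∫⁻ z in B, ENNReal.ofReal (φ z) * S ^ p := by
            refine lintegral_mono_ae (hperz.mono fun z hz => ?_)
            exact mul_le_mul_right hz _
        _ = (∫⁻ z in B, ENNReal.ofReal (φ z)) * S ^ p :=
            lintegral_mul_const' _ _ hSpfin
        _ = S ^ p := by rw [hφ1, one_mul]
    calc (∫⁻ x in ω, ((‖mollifyVar φ ψ u x - u x‖₊ : ℝ≥0∞)) ^ p) ^ (1 / p)
        ≤ (S ^ p) ^ (1 / p) := ENNReal.rpow_le_rpow hfinal (by positivity)
      _ = S := by
          rw [← ENNReal.rpow_mul, mul_one_div, div_self hp0.ne', ENNReal.rpow_one]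
end
end
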